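/- Let h > 0 and k ∈ ℝ (with h < π/(2√(4k)) if k > 0). Let f(s) = ck_{4k}(s) − h₁·sk_{4k}(s) where h₁ = ck_{4k}(h)/sk_{4k}(h). Then for all 0 ≤ ℓ < h, f(ℓ) ≠ 0 and f'(ℓ)/f(ℓ) = −ck_{4k}(h−ℓ)/sk_{4k}(h−ℓ). -/

import Mathlib

open Real in
/-- The generalized sine function for curvature `k`: the solution of `φ'' + kφ = 0`
with `φ(0) = 0`, `φ'(0) = 1`. -/
noncomputable def sk (k t : ℝ) : ℝ :=
  if k < 0 then Real.sinh (Real.sqrt (-k) * t) / Real.sqrt (-k)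
  else if k = 0 then t
  else Real.sin (Real.sqrt k * t) / Real.sqrt k

open Real in
/-- The generalized cosine function for curvature `k`: `ck k = (sk k)'`. -/
noncomputable def ck (k t : ℝ) : ℝ :=
  if k < 0 then Real.cosh (Real.sqrt (-k) * t)
  else if k = 0 then 1
  else Real.cos (Real.sqrt k * t)

/-- Let `h > 0` (with `h < π/(2√(4k))` if `k > 0`), `h₁ = ck (4k) h / sk (4k) h`, and
`f(s) = ck (4k) s − h₁ · sk (4k) s` (the solution of `f'' + 4kf = 0`, `f 0 = 1`,
`f' 0 = −h₁`). Then for all `0 ≤ ℓ < h`, `f ℓ ≠ 0` and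
`f'(ℓ)/f(ℓ) = −ck (4k) (h−ℓ) / sk (4k) (h−ℓ)`. -/
theorem logDeriv_f (k h : ℝ) (hh : 0 < h)
    (hhk : 0 < k → h < Real.pi / (2 * Real.sqrt (4 * k))) :
    ∀ ℓ : ℝ, 0 ≤ ℓ → ℓ < h →
      (fun s => ck (4 * k) s - (ck (4 * k) h / sk (4 * k) h) * sk (4 * k) s) ℓ ≠ 0 ∧
      deriv (fun s => ck (4 * k) s - (ck (4 * k) h / sk (4 * k) h) * sk (4 * k) s) ℓ /
          (ck (4 * k) ℓ - (ck (4 * k) h / sk (4 * k) h) * sk (4 * k) ℓ)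
        = -(ck (4 * k) (h - ℓ) / sk (4 * k) (h - ℓ)) := by
  intro ℓ hl0 hlh
  have hhl : 0 < h - ℓ := by linarith
  rcases lt_trichotomy (4 * k) 0 with hm | hm | hm
  · -- negative curvature
    set c := Real.sqrt (-(4 * k)) with hcdef
    have hc : 0 < c := Real.sqrt_pos.mpr (by linarith)
    have hsk : ∀ t, sk (4 * k) t = Real.sinh (c * t) / c := by
      intro t; simp [sk, hm]; rfl
    have hck : ∀ t, ck (4 * k) t = Real.cosh (c * t) := by
      intro t; simp [ck, hm]; rfl
    have hsh : Real.sinh (c * h) ≠ 0 := ne_of_gt (by positivity)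
    have hshl : Real.sinh (c * (h - ℓ)) ≠ 0 := ne_of_gt (by positivity)
    have hid : ∀ x : ℝ, HasDerivAt (fun s : ℝ => c * s) c x := by
      intro x
      simpa using (hasDerivAt_id x).const_mul c
    have hd : HasDerivAt (fun s => ck (4 * k) s - (ck (4 * k) h / sk (4 * k) h) * sk (4 * k) s)
        (Real.sinh (c * ℓ) * c - (Real.cosh (c * h) / (Real.sinh (c * h) / c)) *
          (Real.cosh (c * ℓ) * c / c)) ℓ := by
      have h1 : HasDerivAt (fun s => Real.cosh (c * s)) (Real.sinh (c * ℓ) * c) ℓ :=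
        (Real.hasDerivAt_cosh (c * ℓ)).comp ℓ (hid ℓ)
      have h2 : HasDerivAt (fun s => Real.sinh (c * s)) (Real.cosh (c * ℓ) * c) ℓ :=
        (Real.hasDerivAt_sinh (c * ℓ)).comp ℓ (hid ℓ)
      have := h1.sub (((h2.div_const c)).const_mul
        (Real.cosh (c * h) / (Real.sinh (c * h) / c)))
      simpa [hsk, hck, Pi.sub_def] using this
    have hfval : ck (4 * k) ℓ - (ck (4 * k) h / sk (4 * k) h) * sk (4 * k) ℓ
        = Real.sinh (c * (h - ℓ)) / Real.sinh (c * h) := by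
      rw [hsk, hck, hck, hsk, mul_sub, Real.sinh_sub]
      field_simp
    refine ⟨by show ck (4*k) ℓ - ck (4*k) h / sk (4*k) h * sk (4*k) ℓ ≠ 0; rw [hfval]; positivity, ?_⟩
    rw [hd.deriv, hfval, hck, hsk]
    rw [mul_sub, Real.sinh_sub, Real.cosh_sub]
    field_simp
    ring
  · -- zero curvature
    have hk : k = 0 := by linarith
    have hsk : ∀ t, sk (4 * k) t = t := by intro t; simp [sk, hk]
    have hck : ∀ t, ck (4 * k) t = 1 := by intro t; simp [ck, hk]
    have hd : HasDerivAt (fun s => ck (4 * k) s - (ck (4 * k) h / sk (4 * k) h) * sk (4 * k) s)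
        (0 - (1 / h) * 1) ℓ := by
      have := (hasDerivAt_const ℓ (1:ℝ)).sub ((hasDerivAt_id ℓ).const_mul (1 / h))
      simpa [hsk, hck, Pi.sub_def] using this
    have hfval : ck (4 * k) ℓ - (ck (4 * k) h / sk (4 * k) h) * sk (4 * k) ℓ
        = (h - ℓ) / h := by
      rw [hsk, hck, hck, hsk]
      field_simp
    refine ⟨by show ck (4*k) ℓ - ck (4*k) h / sk (4*k) h * sk (4*k) ℓ ≠ 0; rw [hfval]; positivity, ?_⟩
    rw [hd.deriv, hfval, hck, hsk]
    field_simp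
    ring
  · -- positive curvature
    have hk : 0 < k := by linarith
    set c := Real.sqrt (4 * k) with hcdef
    have hc : 0 < c := Real.sqrt_pos.mpr hm
    have hhpi : h < Real.pi / (2 * c) := hhk hk
    have hchpi : c * h < Real.pi / 2 := by
      rw [lt_div_iff₀ (by positivity)] at hhpi
      nlinarith
    have hnlt : ¬ (4 * k < 0) := by linarith
    have hne : (4 : ℝ) * k ≠ 0 := ne_of_gt hm
    have hsk : ∀ t, sk (4 * k) t = Real.sin (c * t) / c := by
      intro t; rw [sk, if_neg hnlt, if_neg hne]
    have hck : ∀ t, ck (4 * k) t = Real.cos (c * t) := by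
      intro t; rw [ck, if_neg hnlt, if_neg hne]
    have hsh : Real.sin (c * h) ≠ 0 := by
      refine ne_of_gt (Real.sin_pos_of_pos_of_lt_pi (by positivity) ?_)
      linarith [Real.pi_pos]
    have hshl : Real.sin (c * (h - ℓ)) ≠ 0 := by
      refine ne_of_gt (Real.sin_pos_of_pos_of_lt_pi (by positivity) ?_)
      have : c * (h - ℓ) ≤ c * h := by nlinarith
      linarith [Real.pi_pos]
    have hid : ∀ x : ℝ, HasDerivAt (fun s : ℝ => c * s) c x := by
      intro x
      simpa using (hasDerivAt_id x).const_mul c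
    have hd : HasDerivAt (fun s => ck (4 * k) s - (ck (4 * k) h / sk (4 * k) h) * sk (4 * k) s)
        (-Real.sin (c * ℓ) * c - (Real.cos (c * h) / (Real.sin (c * h) / c)) *
          (Real.cos (c * ℓ) * c / c)) ℓ := by
      have h1 : HasDerivAt (fun s => Real.cos (c * s)) (-Real.sin (c * ℓ) * c) ℓ :=
        (Real.hasDerivAt_cos (c * ℓ)).comp ℓ (hid ℓ)
      have h2 : HasDerivAt (fun s => Real.sin (c * s)) (Real.cos (c * ℓ) * c) ℓ :=
        (Real.hasDerivAt_sin (c * ℓ)).comp ℓ (hid ℓ)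
      have := h1.sub (((h2.div_const c)).const_mul
        (Real.cos (c * h) / (Real.sin (c * h) / c)))
      simpa [hsk, hck, Pi.sub_def] using this
    have hfval : ck (4 * k) ℓ - (ck (4 * k) h / sk (4 * k) h) * sk (4 * k) ℓ
        = Real.sin (c * (h - ℓ)) / Real.sin (c * h) := by
      rw [hsk, hck, hck, hsk, mul_sub, Real.sin_sub]
      field_simp
    constructor
    · show ck (4*k) ℓ - ck (4*k) h / sk (4*k) h * sk (4*k) ℓ ≠ 0
      rw [hfval]
      have : 0 < Real.sin (c * (h - ℓ)) := by
        refine Real.sin_pos_of_pos_of_lt_pi (by positivity) ?_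
        have : c * (h - ℓ) ≤ c * h := by nlinarith
        linarith [Real.pi_pos]
      have : 0 < Real.sin (c * h) := Real.sin_pos_of_pos_of_lt_pi (by positivity)
        (by linarith [Real.pi_pos])
      positivity
    · rw [hd.deriv, hfval, hck, hsk]
      rw [mul_sub, Real.sin_sub, Real.cos_sub]
      field_simp
      ring
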